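/- Let f ∈ BV_V(ℝ²) and let (x, y) be a point of continuity of f. Then for every ε > 0 there exists δ > 0 such that Var(f, [x−δ, x+δ] × [y−δ, y+δ]) < ε. -/

import Mathlib

open Set Filter MeasureTheory Real
open scoped Topology ENNReal

noncomputable section

/-- Sum of absolute second-order rectangular increments of `f` over the grid `x`, `y`. -/
def vitaliSum (f : ℝ → ℝ → ℝ) (x y : ℕ → ℝ) (n m : ℕ) : ℝ :=
  ∑ i ∈ Finset.range n, ∑ j ∈ Finset.range m,
    |f (x (i+1)) (y (j+1)) - f (x i) (y (j+1)) - f (x (i+1)) (y j) + f (x i) (y j)|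

/-- Vitali variation of `f` over a set `Q ⊆ ℝ²`: the supremum, over compact rectangles
contained in `Q` and partitions of them, of the sum of absolute rectangular increments. -/
def vitaliVar (f : ℝ → ℝ → ℝ) (Q : Set (ℝ × ℝ)) : ℝ≥0∞ :=
  ⨆ (n : ℕ) (m : ℕ) (x : ℕ → ℝ) (y : ℕ → ℝ)
    (_ : ∀ i < n, x i < x (i+1)) (_ : ∀ j < m, y j < y (j+1))
    (_ : Set.Icc (x 0) (x n) ×ˢ Set.Icc (y 0) (y m) ⊆ Q),
    ENNReal.ofReal (vitaliSum f x y n m)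

/-- Bounded variation in the sense of Vitali over `ℝ²`. -/
def BVV (f : ℝ → ℝ → ℝ) : Prop := vitaliVar f Set.univ < ⊤

/-- Bounded variation in the sense of Hardy over `ℝ²`. -/
def BVH (f : ℝ → ℝ → ℝ) : Prop :=
  BVV f ∧ (∀ y, BoundedVariationOn (fun s => f s y) Set.univ) ∧
    (∀ x, BoundedVariationOn (fun s => f x s) Set.univ)

/-- The space `BV_{||0||}(ℝ²)`: Vitali bounded variation and vanishing as `‖(x,y)‖ → ∞`. -/
def BVzero (f : ℝ → ℝ → ℝ) : Prop :=
  BVV f ∧ Tendsto (fun p : ℝ × ℝ => f p.1 p.2) (cocompact (ℝ × ℝ)) (𝓝 0)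

/-- `x`, `y` form a partition of `[a,b] × [c,d]` with `n`, resp. `m`, subintervals. -/
def IsPartition (x y : ℕ → ℝ) (n m : ℕ) (a b c d : ℝ) : Prop :=
  x 0 = a ∧ x n = b ∧ y 0 = c ∧ y m = d ∧
    (∀ i < n, x i < x (i+1)) ∧ (∀ j < m, y j < y (j+1))

/-- The tags `(ξ i j, η i j)` belong to the corresponding subrectangles. -/
def Tags (x y : ℕ → ℝ) (ξ η : ℕ → ℕ → ℝ) (n m : ℕ) : Prop :=
  ∀ i < n, ∀ j < m,
    ξ i j ∈ Set.Icc (x i) (x (i+1)) ∧ η i j ∈ Set.Icc (y j) (y (j+1))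

/-- Riemann–Stieltjes sum of `g` with respect to `f`. -/
def RSSum (g f : ℝ → ℝ → ℝ) (x y : ℕ → ℝ) (ξ η : ℕ → ℕ → ℝ) (n m : ℕ) : ℝ :=
  ∑ i ∈ Finset.range n, ∑ j ∈ Finset.range m,
    g (ξ i j) (η i j) *
      (f (x (i+1)) (y (j+1)) - f (x i) (y (j+1)) - f (x (i+1)) (y j) + f (x i) (y j))

/-- `g` is Riemann–Stieltjes integrable with respect to `f` over `[a,b] × [c,d]`,
with integral `A` (mesh measured by the diagonals of the subrectangles). -/
def RSIntegralOn (g f : ℝ → ℝ → ℝ) (a b c d A : ℝ) : Prop :=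
  ∀ ε > 0, ∃ δ > 0, ∀ (n m : ℕ) (x y : ℕ → ℝ) (ξ η : ℕ → ℕ → ℝ),
    IsPartition x y n m a b c d → Tags x y ξ η n m →
    (∀ i < n, ∀ j < m, Real.sqrt ((x (i+1) - x i)^2 + (y (j+1) - y j)^2) < δ) →
    |RSSum g f x y ξ η n m - A| < ε

/-- Improper Riemann–Stieltjes integral of `g` with respect to `f` over `ℝ²`,
as a Pringsheim limit over expanding compact rectangles. -/
def ImproperRS (g f : ℝ → ℝ → ℝ) (A : ℝ) : Prop :=
  ∀ ε > 0, ∃ M : ℝ, ∀ a b c d : ℝ, a ≤ -M → M ≤ b → c ≤ -M → M ≤ d →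
    ∃ B : ℝ, RSIntegralOn g f a b c d B ∧ |B - A| < ε

/-- Improper Riemann–Stieltjes integral of a complex-valued `G` with respect to `f`,
defined via real and imaginary parts. -/
def ImproperRSC (G : ℝ → ℝ → ℂ) (f : ℝ → ℝ → ℝ) (A : ℂ) : Prop :=
  ImproperRS (fun s t => (G s t).re) f A.re ∧ ImproperRS (fun s t => (G s t).im) f A.im

/-- Riemann sum of `f` over a tagged partition. -/
def KHSum (f : ℝ → ℝ → ℝ) (x y : ℕ → ℝ) (ξ η : ℕ → ℕ → ℝ) (n m : ℕ) : ℝ :=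
  ∑ i ∈ Finset.range n, ∑ j ∈ Finset.range m,
    f (ξ i j) (η i j) * (x (i+1) - x i) * (y (j+1) - y j)

/-- The tagged partition is `δ`-fine for the gauge `δ`. -/
def KHFine (δ : ℝ × ℝ → ℝ) (x y : ℕ → ℝ) (ξ η : ℕ → ℕ → ℝ) (n m : ℕ) : Prop :=
  ∀ i < n, ∀ j < m,
    Set.Icc (x i) (x (i+1)) ⊆
      Set.Ioo (ξ i j - δ (ξ i j, η i j)) (ξ i j + δ (ξ i j, η i j)) ∧
    Set.Icc (y j) (y (j+1)) ⊆
      Set.Ioo (η i j - δ (ξ i j, η i j)) (η i j + δ (ξ i j, η i j))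

/-- `f` is Kurzweil–Henstock integrable over `[a,b] × [c,d]` with integral `A`. -/
def KHIntegralOn (f : ℝ → ℝ → ℝ) (a b c d A : ℝ) : Prop :=
  ∀ ε > 0, ∃ δ : ℝ × ℝ → ℝ, (∀ p, 0 < δ p) ∧
    ∀ (n m : ℕ) (x y : ℕ → ℝ) (ξ η : ℕ → ℕ → ℝ),
      IsPartition x y n m a b c d → Tags x y ξ η n m → KHFine δ x y ξ η n m →
      |KHSum f x y ξ η n m - A| < ε

/-- Kurzweil–Henstock integrability of a complex-valued function, via components. -/
def KHIntegralOnC (f : ℝ → ℝ → ℂ) (a b c d : ℝ) (A : ℂ) : Prop :=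
  KHIntegralOn (fun s t => (f s t).re) a b c d A.re ∧
  KHIntegralOn (fun s t => (f s t).im) a b c d A.im

/-- Pringsheim limit, over expanding compact rectangles, of Kurzweil–Henstock integrals. -/
def HasKHPringsheim (f : ℝ → ℝ → ℝ) (A : ℝ) : Prop :=
  ∀ ε > 0, ∃ M : ℝ, ∀ a b c d : ℝ, a ≤ -M → M ≤ b → c ≤ -M → M ≤ d →
    ∃ B : ℝ, KHIntegralOn f a b c d B ∧ |B - A| < ε

/-- Complex-valued Pringsheim limit of Kurzweil–Henstock integrals. -/
def HasKHPringsheimC (f : ℝ → ℝ → ℂ) (A : ℂ) : Prop :=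
  ∀ ε > 0, ∃ M : ℝ, ∀ a b c d : ℝ, a ≤ -M → M ≤ b → c ≤ -M → M ≤ d →
    ∃ B : ℂ, KHIntegralOnC f a b c d B ∧ ‖B - A‖ < ε

/-- The kernel `e^{-i(ξ t₁ + η t₂)}`. -/
def fourierKernel (ξ η t₁ t₂ : ℝ) : ℂ :=
  Complex.exp (-Complex.I * ((ξ * t₁ + η * t₂ : ℝ) : ℂ))

/-- `A` is the KP-Fourier transform of `f` at `(ξ, η)`. -/
def HasKPFourier (f : ℝ → ℝ → ℝ) (ξ η : ℝ) (A : ℂ) : Prop :=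
  HasKHPringsheimC (fun t₁ t₂ => (f t₁ t₂ : ℂ) * fourierKernel ξ η t₁ t₂) A

/-- The region `{(ξ,η) : α₁ ≤ |ξ| ≤ β₁, α₂ ≤ |η| ≤ β₂}`. -/
def annulusRect (α₁ β₁ α₂ β₂ : ℝ) : Set (ℝ × ℝ) :=
  {p | α₁ ≤ |p.1| ∧ |p.1| ≤ β₁ ∧ α₂ ≤ |p.2| ∧ |p.2| ≤ β₂}

/-- The kernel `(sin(βt) - sin(αt))/t`, extended by continuity at `t = 0`. -/
def sinKernel (α β t : ℝ) : ℝ :=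
  if t = 0 then β - α else (Real.sin (β * t) - Real.sin (α * t)) / t

/-- The kernel `h_{α,β}(t) = (sin(βt) - sin(αt))/(πt)`, extended by continuity at `t = 0`. -/
def sinKernelPi (α β t : ℝ) : ℝ :=
  if t = 0 then (β - α) / π else (Real.sin (β * t) - Real.sin (α * t)) / (π * t)

/-- `g_{(x,y)}(t₁,t₂) = f(x−t₁,y−t₂) + f(x−t₁,y+t₂) + f(x+t₁,y−t₂) + f(x+t₁,y+t₂)`. -/
def quadSum (f : ℝ → ℝ → ℝ) (x y t₁ t₂ : ℝ) : ℝ :=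
  f (x - t₁) (y - t₂) + f (x - t₁) (y + t₂) + f (x + t₁) (y - t₂) + f (x + t₁) (y + t₂)

section Aux

open Finset in
private lemma tele1 (g : ℕ → ℝ) {a b : ℕ} (h : a ≤ b) :
    ∑ i ∈ Finset.Ico a b, (g (i + 1) - g i) = g b - g a := by
  rw [Finset.sum_Ico_eq_sub _ h, Finset.sum_range_sub, Finset.sum_range_sub]
  ring

private lemma tele2 (f : ℝ → ℝ → ℝ) (x y : ℕ → ℝ) {a b c d : ℕ} (hab : a ≤ b) (hcd : c ≤ d) :
    ∑ p ∈ Finset.Ico a b, ∑ q ∈ Finset.Ico c d,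
      (f (x (p + 1)) (y (q + 1)) - f (x p) (y (q + 1)) - f (x (p + 1)) (y q) + f (x p) (y q))
      = f (x b) (y d) - f (x a) (y d) - f (x b) (y c) + f (x a) (y c) := by
  have hinner : ∀ p, ∑ q ∈ Finset.Ico c d,
      (f (x (p + 1)) (y (q + 1)) - f (x p) (y (q + 1)) - f (x (p + 1)) (y q) + f (x p) (y q))
      = (f (x (p+1)) (y d) - f (x p) (y d)) - (f (x (p+1)) (y c) - f (x p) (y c)) := by
    intro p
    have := tele1 (fun q => f (x (p + 1)) (y q) - f (x p) (y q)) hcd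
    rw [← this]
    apply Finset.sum_congr rfl
    intro q _; ring
  calc ∑ p ∈ Finset.Ico a b, ∑ q ∈ Finset.Ico c d,
        (f (x (p + 1)) (y (q + 1)) - f (x p) (y (q + 1)) - f (x (p + 1)) (y q) + f (x p) (y q))
      = ∑ p ∈ Finset.Ico a b,
        ((fun p => f (x p) (y d) - f (x p) (y c)) (p+1) - (fun p => f (x p) (y d) - f (x p) (y c)) p) := by
        apply Finset.sum_congr rfl; intro p _; rw [hinner]; ring
    _ = _ := by rw [tele1 (fun p => f (x p) (y d) - f (x p) (y c)) hab]; ring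

private lemma gridStrictMono {u : ℕ → ℝ} {n : ℕ} (h : ∀ i < n, u i < u (i + 1)) :
    ∀ i j, i < j → j ≤ n → u i < u j := by
  intro i j hij hjn
  induction j with
  | zero => omega
  | succ j ih =>
    rcases Nat.lt_or_ge i j with h' | h'
    · exact lt_trans (ih h' (by omega)) (h j (by omega))
    · have : i = j := by omega
      subst this; exact h i (by omega)

private lemma gridMono {u : ℕ → ℝ} {n : ℕ} (h : ∀ i < n, u i < u (i + 1)) :
    ∀ i j, i ≤ j → j ≤ n → u i ≤ u j := by
  intro i j hij hjn
  rcases Nat.lt_or_ge i j with h' | h'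
  · exact (gridStrictMono h i j h' hjn).le
  · have : i = j := by omega
    subst this; exact le_rfl

private lemma Ioo_disj_of_le {a b c d : ℝ} (h : b ≤ c) : Set.Ioo a b ∩ Set.Ioo c d = ∅ := by
  ext z; simp only [Set.mem_inter_iff, Set.mem_Ioo, Set.mem_empty_iff_false, iff_false]
  rintro ⟨⟨_, h1⟩, ⟨h2, _⟩⟩; linarith

private lemma le_vitaliVar (f : ℝ → ℝ → ℝ) (Q : Set (ℝ × ℝ)) (n m : ℕ) (x y : ℕ → ℝ)
    (h1 : ∀ i < n, x i < x (i + 1)) (h2 : ∀ j < m, y j < y (j + 1))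
    (h3 : Set.Icc (x 0) (x n) ×ˢ Set.Icc (y 0) (y m) ⊆ Q) :
    ENNReal.ofReal (vitaliSum f x y n m) ≤ vitaliVar f Q := by
  unfold vitaliVar
  exact le_iSup_of_le n (le_iSup_of_le m (le_iSup_of_le x (le_iSup_of_le y
    (le_iSup_of_le h1 (le_iSup_of_le h2 (le_iSup_of_le h3 le_rfl))))))

private lemma vitaliVar_le {f : ℝ → ℝ → ℝ} {Q : Set (ℝ × ℝ)} {C : ℝ≥0∞}
    (h : ∀ (n m : ℕ) (x y : ℕ → ℝ), (∀ i < n, x i < x (i + 1)) → (∀ j < m, y j < y (j + 1)) →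
      Set.Icc (x 0) (x n) ×ˢ Set.Icc (y 0) (y m) ⊆ Q →
      ENNReal.ofReal (vitaliSum f x y n m) ≤ C) :
    vitaliVar f Q ≤ C := by
  unfold vitaliVar
  exact iSup_le fun n => iSup_le fun m => iSup_le fun x => iSup_le fun y =>
    iSup_le fun h1 => iSup_le fun h2 => iSup_le fun h3 => h n m x y h1 h2 h3

private lemma vitaliVar_mono (f : ℝ → ℝ → ℝ) {Q Q' : Set (ℝ × ℝ)} (hQQ : Q ⊆ Q') :
    vitaliVar f Q ≤ vitaliVar f Q' :=
  vitaliVar_le fun n m x y h1 h2 h3 => le_vitaliVar f Q' n m x y h1 h2 (h3.trans hQQ)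

private lemma exists_grid {f : ℝ → ℝ → ℝ} {Q : Set (ℝ × ℝ)} {C : ℝ≥0∞}
    (h : C < vitaliVar f Q) :
    ∃ (n m : ℕ) (x y : ℕ → ℝ), (∀ i < n, x i < x (i + 1)) ∧ (∀ j < m, y j < y (j + 1)) ∧
      (Set.Icc (x 0) (x n) ×ˢ Set.Icc (y 0) (y m) ⊆ Q) ∧
      C < ENNReal.ofReal (vitaliSum f x y n m) := by
  unfold vitaliVar at h
  simp only [lt_iSup_iff] at h
  obtain ⟨n, m, x, y, h1, h2, h3, h4⟩ := h
  exact ⟨n, m, x, y, h1, h2, h3, h4⟩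

private lemma card_filter_le_two {px : ℕ → ℝ} {n : ℕ} (hmono : ∀ i < n, px i < px (i + 1))
    (x : ℝ) : ((Finset.range n).filter fun i => px i ≤ x ∧ x ≤ px (i + 1)).card ≤ 2 := by
  set t := (Finset.range n).filter fun i => px i ≤ x ∧ x ≤ px (i + 1) with ht
  rcases t.eq_empty_or_nonempty with he | hne
  · simp [he]
  · have hsub : t ⊆ Finset.Icc (t.min' hne) (t.min' hne + 1) := by
      intro i hi
      rw [Finset.mem_Icc]
      refine ⟨Finset.min'_le t i hi, ?_⟩
      by_contra hcon
      push_neg at hcon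
      have hi0 := t.min'_mem hne
      have hi' := Finset.mem_filter.mp hi
      have hi0' := Finset.mem_filter.mp hi0
      rw [Finset.mem_range] at hi' hi0'
      have h1 : px (t.min' hne + 1) < px i :=
        gridStrictMono hmono _ _ (by omega) (by omega)
      have := hi'.2.1
      have := hi0'.2.2
      linarith
    calc t.card ≤ _ := Finset.card_le_card hsub
      _ ≤ 2 := by rw [Nat.card_Icc]; omega

private lemma master {ι : Type} (f : ℝ → ℝ → ℝ) (s : Finset ι)
    (a b c d : ι → ℝ) (p q r u : ℝ)
    (hnd : ∀ k ∈ s, a k < b k ∧ c k < d k)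
    (hbox : ∀ k ∈ s, p ≤ a k ∧ b k ≤ q ∧ r ≤ c k ∧ d k ≤ u)
    (hdisj : ∀ k ∈ s, ∀ l ∈ s, k ≠ l →
      Set.Ioo (a k) (b k) ∩ Set.Ioo (a l) (b l) = ∅ ∨
      Set.Ioo (c k) (d k) ∩ Set.Ioo (c l) (d l) = ∅) :
    ENNReal.ofReal (∑ k ∈ s, |f (b k) (d k) - f (a k) (d k) - f (b k) (c k) + f (a k) (c k)|)
      ≤ vitaliVar f (Set.Icc p q ×ˢ Set.Icc r u) := by
  classical
  rcases s.eq_empty_or_nonempty with he | hsne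
  · simp [he]
  obtain ⟨k₀, hk₀⟩ := hsne
  set X : Finset ℝ := s.image a ∪ s.image b with hXdef
  set Y : Finset ℝ := s.image c ∪ s.image d with hYdef
  have hXne : X.Nonempty := ⟨a k₀, Finset.mem_union_left _ (Finset.mem_image_of_mem a hk₀)⟩
  have hYne : Y.Nonempty := ⟨c k₀, Finset.mem_union_left _ (Finset.mem_image_of_mem c hk₀)⟩
  set N := X.card - 1 with hNdef
  set M := Y.card - 1 with hMdef
  have hNcard : N + 1 = X.card := Nat.succ_pred_eq_of_pos (Finset.card_pos.2 hXne)
  have hMcard : M + 1 = Y.card := Nat.succ_pred_eq_of_pos (Finset.card_pos.2 hYne)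
  set eX := X.orderIsoOfFin (rfl : X.card = X.card) with heX
  set eY := Y.orderIsoOfFin (rfl : Y.card = Y.card) with heY
  set gx : ℕ → ℝ := fun i => if h : i < X.card then (eX ⟨i, h⟩ : ℝ) else 0 with hgxdef
  set gy : ℕ → ℝ := fun j => if h : j < Y.card then (eY ⟨j, h⟩ : ℝ) else 0 with hgydef
  have hgx_mem : ∀ i (h : i < X.card), gx i ∈ X := by
    intro i h; rw [hgxdef]; simp only [dif_pos h]; exact (eX ⟨i, h⟩).2
  have hgy_mem : ∀ j (h : j < Y.card), gy j ∈ Y := by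
    intro j h; rw [hgydef]; simp only [dif_pos h]; exact (eY ⟨j, h⟩).2
  have hgx_lt : ∀ i j, i < j → j < X.card → gx i < gx j := by
    intro i j hij hj
    rw [hgxdef]; simp only [dif_pos (hij.trans hj), dif_pos hj]
    exact Subtype.coe_lt_coe.2 (eX.lt_iff_lt.2 (by exact hij))
  have hgy_lt : ∀ i j, i < j → j < Y.card → gy i < gy j := by
    intro i j hij hj
    rw [hgydef]; simp only [dif_pos (hij.trans hj), dif_pos hj]
    exact Subtype.coe_lt_coe.2 (eY.lt_iff_lt.2 (by exact hij))
  have hgx_le : ∀ i j, i ≤ j → j < X.card → gx i ≤ gx j := by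
    intro i j hij hj
    rcases Nat.lt_or_ge i j with h' | h'
    · exact (hgx_lt i j h' hj).le
    · have : i = j := by omega
      rw [this]
  have hgy_le : ∀ i j, i ≤ j → j < Y.card → gy i ≤ gy j := by
    intro i j hij hj
    rcases Nat.lt_or_ge i j with h' | h'
    · exact (hgy_lt i j h' hj).le
    · have : i = j := by omega
      rw [this]
  set A : ι → ℕ := fun k => if hz : a k ∈ X then ((eX.symm ⟨a k, hz⟩ : Fin X.card) : ℕ) else 0
    with hAdef
  set B : ι → ℕ := fun k => if hz : b k ∈ X then ((eX.symm ⟨b k, hz⟩ : Fin X.card) : ℕ) else 0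
    with hBdef
  set C : ι → ℕ := fun k => if hz : c k ∈ Y then ((eY.symm ⟨c k, hz⟩ : Fin Y.card) : ℕ) else 0
    with hCdef
  set D : ι → ℕ := fun k => if hz : d k ∈ Y then ((eY.symm ⟨d k, hz⟩ : Fin Y.card) : ℕ) else 0
    with hDdef
  have keyX : ∀ (z : ℝ) (hz : z ∈ X),
      (if hz' : z ∈ X then ((eX.symm ⟨z, hz'⟩ : Fin X.card) : ℕ) else 0) < X.card ∧
      gx (if hz' : z ∈ X then ((eX.symm ⟨z, hz'⟩ : Fin X.card) : ℕ) else 0) = z := by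
    intro z hz
    simp only [dif_pos hz]
    refine ⟨(eX.symm ⟨z, hz⟩).isLt, ?_⟩
    rw [hgxdef]; simp only [dif_pos (eX.symm ⟨z, hz⟩).isLt]
    have : (⟨((eX.symm ⟨z, hz⟩ : Fin X.card) : ℕ), (eX.symm ⟨z, hz⟩).isLt⟩ : Fin X.card)
        = eX.symm ⟨z, hz⟩ := by ext; rfl
    rw [this, OrderIso.apply_symm_apply]
  have keyY : ∀ (z : ℝ) (hz : z ∈ Y),
      (if hz' : z ∈ Y then ((eY.symm ⟨z, hz'⟩ : Fin Y.card) : ℕ) else 0) < Y.card ∧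
      gy (if hz' : z ∈ Y then ((eY.symm ⟨z, hz'⟩ : Fin Y.card) : ℕ) else 0) = z := by
    intro z hz
    simp only [dif_pos hz]
    refine ⟨(eY.symm ⟨z, hz⟩).isLt, ?_⟩
    rw [hgydef]; simp only [dif_pos (eY.symm ⟨z, hz⟩).isLt]
    have : (⟨((eY.symm ⟨z, hz⟩ : Fin Y.card) : ℕ), (eY.symm ⟨z, hz⟩).isLt⟩ : Fin Y.card)
        = eY.symm ⟨z, hz⟩ := by ext; rfl
    rw [this, OrderIso.apply_symm_apply]
  have hamem : ∀ k ∈ s, a k ∈ X := fun k hk =>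
    Finset.mem_union_left _ (Finset.mem_image_of_mem a hk)
  have hbmem : ∀ k ∈ s, b k ∈ X := fun k hk =>
    Finset.mem_union_right _ (Finset.mem_image_of_mem b hk)
  have hcmem : ∀ k ∈ s, c k ∈ Y := fun k hk =>
    Finset.mem_union_left _ (Finset.mem_image_of_mem c hk)
  have hdmem : ∀ k ∈ s, d k ∈ Y := fun k hk =>
    Finset.mem_union_right _ (Finset.mem_image_of_mem d hk)
  have hA : ∀ k ∈ s, A k < X.card ∧ gx (A k) = a k := fun k hk => keyX (a k) (hamem k hk)
  have hB : ∀ k ∈ s, B k < X.card ∧ gx (B k) = b k := fun k hk => keyX (b k) (hbmem k hk)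
  have hC : ∀ k ∈ s, C k < Y.card ∧ gy (C k) = c k := fun k hk => keyY (c k) (hcmem k hk)
  have hD : ∀ k ∈ s, D k < Y.card ∧ gy (D k) = d k := fun k hk => keyY (d k) (hdmem k hk)
  have hAB : ∀ k ∈ s, A k < B k := by
    intro k hk
    by_contra hcon
    push_neg at hcon
    have := hgx_le _ _ hcon (hA k hk).1
    rw [(hA k hk).2, (hB k hk).2] at this
    exact absurd this (not_le.2 (hnd k hk).1)
  have hCD : ∀ k ∈ s, C k < D k := by
    intro k hk
    by_contra hcon
    push_neg at hcon
    have := hgy_le _ _ hcon (hC k hk).1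
    rw [(hC k hk).2, (hD k hk).2] at this
    exact absurd this (not_le.2 (hnd k hk).2)
  set blk : ι → Finset (ℕ × ℕ) := fun k => Finset.Ico (A k) (B k) ×ˢ Finset.Ico (C k) (D k)
    with hblkdef
  set h : ℕ → ℕ → ℝ := fun i j =>
    |f (gx (i+1)) (gy (j+1)) - f (gx i) (gy (j+1)) - f (gx (i+1)) (gy j) + f (gx i) (gy j)|
    with hhdef
  -- Step 1 : per-cell bound
  have step1 : ∀ k ∈ s,
      |f (b k) (d k) - f (a k) (d k) - f (b k) (c k) + f (a k) (c k)|
        ≤ ∑ z ∈ blk k, h z.1 z.2 := by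
    intro k hk
    have htel := tele2 f gx gy (hAB k hk).le (hCD k hk).le
    rw [(hA k hk).2, (hB k hk).2, (hC k hk).2, (hD k hk).2] at htel
    rw [← htel]
    calc |∑ p' ∈ Finset.Ico (A k) (B k), ∑ q' ∈ Finset.Ico (C k) (D k),
          (f (gx (p' + 1)) (gy (q' + 1)) - f (gx p') (gy (q' + 1)) -
            f (gx (p' + 1)) (gy q') + f (gx p') (gy q'))|
        ≤ ∑ p' ∈ Finset.Ico (A k) (B k), |∑ q' ∈ Finset.Ico (C k) (D k),
          (f (gx (p' + 1)) (gy (q' + 1)) - f (gx p') (gy (q' + 1)) -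
            f (gx (p' + 1)) (gy q') + f (gx p') (gy q'))| :=
          Finset.abs_sum_le_sum_abs _ _
      _ ≤ ∑ p' ∈ Finset.Ico (A k) (B k), ∑ q' ∈ Finset.Ico (C k) (D k),
          |f (gx (p' + 1)) (gy (q' + 1)) - f (gx p') (gy (q' + 1)) -
            f (gx (p' + 1)) (gy q') + f (gx p') (gy q')| :=
          Finset.sum_le_sum fun p' _ => Finset.abs_sum_le_sum_abs _ _
      _ = ∑ z ∈ blk k, h z.1 z.2 := by
          rw [hblkdef, Finset.sum_product]
  -- Step 2 : blocks are pairwise disjoint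
  have step2 : (↑s : Set ι).PairwiseDisjoint blk := by
    intro k hk l hl hkl
    rw [Finset.mem_coe] at hk hl
    show Disjoint (blk k) (blk l)
    rw [Finset.disjoint_left]
    rintro ⟨i, j⟩ hzk hzl
    rw [hblkdef, Finset.mem_product, Finset.mem_Ico, Finset.mem_Ico] at hzk hzl
    rcases hdisj k hk l hl hkl with hx | hy
    · have hik : i + 1 ≤ B k := hzk.1.2
      have hik2 : i + 1 < X.card := lt_of_le_of_lt hik (hB k hk).1
      have hlt : gx i < gx (i + 1) := hgx_lt i (i + 1) (Nat.lt_succ_self i) hik2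
      set z0 := (gx i + gx (i + 1)) / 2 with hz0
      have hz0k : z0 ∈ Set.Ioo (a k) (b k) := by
        constructor
        · calc a k = gx (A k) := ((hA k hk).2).symm
            _ ≤ gx i := hgx_le _ _ hzk.1.1 (by omega)
            _ < z0 := by rw [hz0]; linarith
        · calc z0 < gx (i + 1) := by rw [hz0]; linarith
            _ ≤ gx (B k) := hgx_le _ _ hik (hB k hk).1
            _ = b k := (hB k hk).2
      have hz0l : z0 ∈ Set.Ioo (a l) (b l) := by
        constructor
        · calc a l = gx (A l) := ((hA l hl).2).symm
            _ ≤ gx i := hgx_le _ _ hzl.1.1 (by omega)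
            _ < z0 := by rw [hz0]; linarith
        · calc z0 < gx (i + 1) := by rw [hz0]; linarith
            _ ≤ gx (B l) := hgx_le _ _ hzl.1.2 (hB l hl).1
            _ = b l := (hB l hl).2
      have : z0 ∈ Set.Ioo (a k) (b k) ∩ Set.Ioo (a l) (b l) := ⟨hz0k, hz0l⟩
      rw [hx] at this
      exact this
    · have hjk : j + 1 ≤ D k := hzk.2.2
      have hjk2 : j + 1 < Y.card := lt_of_le_of_lt hjk (hD k hk).1
      have hlt : gy j < gy (j + 1) := hgy_lt j (j + 1) (Nat.lt_succ_self j) hjk2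
      set z0 := (gy j + gy (j + 1)) / 2 with hz0
      have hz0k : z0 ∈ Set.Ioo (c k) (d k) := by
        constructor
        · calc c k = gy (C k) := ((hC k hk).2).symm
            _ ≤ gy j := hgy_le _ _ hzk.2.1 (by omega)
            _ < z0 := by rw [hz0]; linarith
        · calc z0 < gy (j + 1) := by rw [hz0]; linarith
            _ ≤ gy (D k) := hgy_le _ _ hjk (hD k hk).1
            _ = d k := (hD k hk).2
      have hz0l : z0 ∈ Set.Ioo (c l) (d l) := by
        constructor
        · calc c l = gy (C l) := ((hC l hl).2).symm
            _ ≤ gy j := hgy_le _ _ hzl.2.1 (by omega)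
            _ < z0 := by rw [hz0]; linarith
        · calc z0 < gy (j + 1) := by rw [hz0]; linarith
            _ ≤ gy (D l) := hgy_le _ _ hzl.2.2 (hD l hl).1
            _ = d l := (hD l hl).2
      have : z0 ∈ Set.Ioo (c k) (d k) ∩ Set.Ioo (c l) (d l) := ⟨hz0k, hz0l⟩
      rw [hy] at this
      exact this
  -- Step 3 : compare with the full grid sum
  have step3 : ∑ k ∈ s, |f (b k) (d k) - f (a k) (d k) - f (b k) (c k) + f (a k) (c k)|
      ≤ vitaliSum f gx gy N M := by
    calc ∑ k ∈ s, |f (b k) (d k) - f (a k) (d k) - f (b k) (c k) + f (a k) (c k)|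
        ≤ ∑ k ∈ s, ∑ z ∈ blk k, h z.1 z.2 := Finset.sum_le_sum step1
      _ = ∑ z ∈ s.biUnion blk, h z.1 z.2 := (Finset.sum_biUnion step2).symm
      _ ≤ ∑ z ∈ Finset.range N ×ˢ Finset.range M, h z.1 z.2 := by
          apply Finset.sum_le_sum_of_subset_of_nonneg
          · intro z hz
            rw [Finset.mem_biUnion] at hz
            obtain ⟨k, hk, hzk⟩ := hz
            rw [hblkdef, Finset.mem_product, Finset.mem_Ico, Finset.mem_Ico] at hzk
            rw [Finset.mem_product, Finset.mem_range, Finset.mem_range]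
            constructor
            · have : z.1 < B k := hzk.1.2
              have := (hB k hk).1
              omega
            · have : z.2 < D k := hzk.2.2
              have := (hD k hk).1
              omega
          · intro z _ _
            rw [hhdef]
            exact abs_nonneg _
      _ = vitaliSum f gx gy N M := by
          rw [vitaliSum, Finset.sum_product]
  -- Step 4 : the grid is admissible
  have hgrid1 : ∀ i < N, gx i < gx (i + 1) := fun i hi =>
    hgx_lt i (i + 1) (Nat.lt_succ_self i) (by omega)
  have hgrid2 : ∀ j < M, gy j < gy (j + 1) := fun j hj =>
    hgy_lt j (j + 1) (Nat.lt_succ_self j) (by omega)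
  have hXb : ∀ z ∈ X, p ≤ z ∧ z ≤ q := by
    intro z hz
    rw [hXdef, Finset.mem_union] at hz
    rcases hz with hz | hz <;> rw [Finset.mem_image] at hz <;>
      obtain ⟨k, hk, rfl⟩ := hz
    · exact ⟨(hbox k hk).1, le_trans (hnd k hk).1.le (hbox k hk).2.1⟩
    · exact ⟨le_trans (hbox k hk).1 (hnd k hk).1.le, (hbox k hk).2.1⟩
  have hYb : ∀ z ∈ Y, r ≤ z ∧ z ≤ u := by
    intro z hz
    rw [hYdef, Finset.mem_union] at hz
    rcases hz with hz | hz <;> rw [Finset.mem_image] at hz <;>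
      obtain ⟨k, hk, rfl⟩ := hz
    · exact ⟨(hbox k hk).2.2.1, le_trans (hnd k hk).2.le (hbox k hk).2.2.2⟩
    · exact ⟨le_trans (hbox k hk).2.2.1 (hnd k hk).2.le, (hbox k hk).2.2.2⟩
  have hsubset : Set.Icc (gx 0) (gx N) ×ˢ Set.Icc (gy 0) (gy M) ⊆
      Set.Icc p q ×ˢ Set.Icc r u := by
    apply Set.prod_mono
    · exact Set.Icc_subset_Icc (hXb _ (hgx_mem 0 (by omega))).1 (hXb _ (hgx_mem N (by omega))).2
    · exact Set.Icc_subset_Icc (hYb _ (hgy_mem 0 (by omega))).1 (hYb _ (hgy_mem M (by omega))).2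
  exact le_trans (ENNReal.ofReal_le_ofReal step3)
    (le_vitaliVar f _ N M gx gy hgrid1 hgrid2 hsubset)

end Aux

set_option maxHeartbeats 4000000 in
/-- Lemma: if `f ∈ BV_V(ℝ²)` and `(x,y)` is a point of continuity of `f`, then for every
`ε > 0` there is `δ > 0` with `Var(f, [x−δ,x+δ] × [y−δ,y+δ]) < ε`. -/
theorem stmt8 (f : ℝ → ℝ → ℝ) (hf : BVV f) (x y : ℝ)
    (hc : ContinuousAt (fun p : ℝ × ℝ => f p.1 p.2) (x, y)) :
    ∀ ε > (0 : ℝ), ∃ δ > (0 : ℝ),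
      vitaliVar f (Set.Icc (x - δ) (x + δ) ×ˢ Set.Icc (y - δ) (y + δ)) <
        ENNReal.ofReal ε := by
  intro ε hε
  classical
  set η := ε / 256 with hηdef
  have hηpos : 0 < η := by positivity
  obtain ⟨δ1, hδ1, hball⟩ := Metric.continuousAt_iff.1 hc η hηpos
  set δ0 := δ1 / 2 with hδ0def
  have hδ0 : 0 < δ0 := by positivity
  have hosc : ∀ u v : ℝ, |u - x| ≤ δ0 → |v - y| ≤ δ0 → |f u v - f x y| ≤ η := by
    intro u v hu hv
    have hd : dist ((u, v) : ℝ × ℝ) ((x, y) : ℝ × ℝ) < δ1 := by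
      rw [Prod.dist_eq]
      apply max_lt <;> rw [Real.dist_eq]
      · linarith
      · linarith
    have h2 := hball hd
    rw [Real.dist_eq] at h2
    exact h2.le
  set Q0 := Set.Icc (x - δ0) (x + δ0) ×ˢ Set.Icc (y - δ0) (y + δ0) with hQ0
  by_cases hV : vitaliVar f Q0 < ENNReal.ofReal ε
  · exact ⟨δ0, hδ0, hV⟩
  push_neg at hV
  have hVtop : vitaliVar f Q0 ≠ ⊤ :=
    (lt_of_le_of_lt (vitaliVar_mono f (Set.subset_univ _)) hf).ne
  have hVne0 : vitaliVar f Q0 ≠ 0 := (lt_of_lt_of_le (ENNReal.ofReal_pos.2 hε) hV).ne'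
  have hsub : vitaliVar f Q0 - ENNReal.ofReal (ε / 4) < vitaliVar f Q0 :=
    ENNReal.sub_lt_self hVtop hVne0 (by rw [Ne, ENNReal.ofReal_eq_zero]; push_neg; linarith)
  obtain ⟨n, m, px, py, hpx, hpy, hrect, hPlt⟩ := exists_grid hsub
  have hVle : vitaliVar f Q0 ≤
      ENNReal.ofReal (vitaliSum f px py n m) + ENNReal.ofReal (ε / 4) := by
    have h2 := hPlt.le
    rw [tsub_le_iff_right] at h2
    exact h2
  have hpxm : ∀ i j : ℕ, i ≤ j → j ≤ n → px i ≤ px j := gridMono hpx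
  have hpym : ∀ i j : ℕ, i ≤ j → j ≤ m → py i ≤ py j := gridMono hpy
  have hcorner : x - δ0 ≤ px 0 ∧ px n ≤ x + δ0 ∧ y - δ0 ≤ py 0 ∧ py m ≤ y + δ0 := by
    have h1 : ((px 0, py 0) : ℝ × ℝ) ∈ Set.Icc (px 0) (px n) ×ˢ Set.Icc (py 0) (py m) :=
      ⟨⟨le_rfl, hpxm 0 n (by omega) le_rfl⟩, ⟨le_rfl, hpym 0 m (by omega) le_rfl⟩⟩
    have h2 : ((px n, py m) : ℝ × ℝ) ∈ Set.Icc (px 0) (px n) ×ˢ Set.Icc (py 0) (py m) :=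
      ⟨⟨hpxm 0 n (by omega) le_rfl, le_rfl⟩, ⟨hpym 0 m (by omega) le_rfl, le_rfl⟩⟩
    have h1' := hrect h1
    have h2' := hrect h2
    rw [hQ0] at h1' h2'
    exact ⟨h1'.1.1, h2'.1.2, h1'.2.1, h2'.2.2⟩
  set mx : ℕ → ℝ := fun i => max (px i) (min x (px (i + 1))) with hmxdef
  set my : ℕ → ℝ := fun j => max (py j) (min y (py (j + 1))) with hmydef
  have hmx1 : ∀ i, px i ≤ mx i := fun i => le_max_left _ _
  have hmx2 : ∀ i < n, mx i ≤ px (i + 1) := fun i hi =>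
    max_le (hpx i hi).le (min_le_right _ _)
  have hmy1 : ∀ j, py j ≤ my j := fun j => le_max_left _ _
  have hmy2 : ∀ j < m, my j ≤ py (j + 1) := fun j hj =>
    max_le (hpy j hj).le (min_le_right _ _)
  set pa : (ℕ × ℕ) × Bool × Bool → ℝ := fun k => if k.2.1 then px k.1.1 else mx k.1.1
    with hpadef
  set pb : (ℕ × ℕ) × Bool × Bool → ℝ := fun k => if k.2.1 then mx k.1.1 else px (k.1.1 + 1)
    with hpbdef
  set pc : (ℕ × ℕ) × Bool × Bool → ℝ := fun k => if k.2.2 then py k.1.2 else my k.1.2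
    with hpcdef
  set pd : (ℕ × ℕ) × Bool × Bool → ℝ := fun k => if k.2.2 then my k.1.2 else py (k.1.2 + 1)
    with hpddef
  set Δp : (ℕ × ℕ) × Bool × Bool → ℝ := fun k =>
    f (pb k) (pd k) - f (pa k) (pd k) - f (pb k) (pc k) + f (pa k) (pc k) with hΔpdef
  set s : Finset ((ℕ × ℕ) × Bool × Bool) :=
    (Finset.range n ×ˢ Finset.range m) ×ˢ Finset.univ with hsdef
  have hmem : ∀ k ∈ s, k.1.1 < n ∧ k.1.2 < m := by
    intro k hk
    rw [hsdef, Finset.mem_product, Finset.mem_product, Finset.mem_range, Finset.mem_range] at hk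
    exact ⟨hk.1.1, hk.1.2⟩
  have hpab : ∀ k : (ℕ × ℕ) × Bool × Bool, k.1.1 < n →
      px k.1.1 ≤ pa k ∧ pa k ≤ pb k ∧ pb k ≤ px (k.1.1 + 1) := by
    intro k hi
    rw [hpadef, hpbdef]
    cases hq : k.2.1
    · simp only [hq, Bool.false_eq_true, if_false]
      exact ⟨hmx1 _, hmx2 _ hi, le_rfl⟩
    · simp only [hq, if_true]
      exact ⟨le_rfl, hmx1 _, hmx2 _ hi⟩
  have hpcd : ∀ k : (ℕ × ℕ) × Bool × Bool, k.1.2 < m →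
      py k.1.2 ≤ pc k ∧ pc k ≤ pd k ∧ pd k ≤ py (k.1.2 + 1) := by
    intro k hj
    rw [hpcdef, hpddef]
    cases hq : k.2.2
    · simp only [hq, Bool.false_eq_true, if_false]
      exact ⟨hmy1 _, hmy2 _ hj, le_rfl⟩
    · simp only [hq, if_true]
      exact ⟨le_rfl, hmy1 _, hmy2 _ hj⟩
  have hcell : ∀ i < n, ∀ j < m,
      |f (px (i + 1)) (py (j + 1)) - f (px i) (py (j + 1)) - f (px (i + 1)) (py j) +
        f (px i) (py j)| ≤ ∑ qq : Bool × Bool, |Δp ((i, j), qq)| := by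
    intro i hi j hj
    have hid : f (px (i + 1)) (py (j + 1)) - f (px i) (py (j + 1)) - f (px (i + 1)) (py j) +
        f (px i) (py j) = ∑ qq : Bool × Bool, Δp ((i, j), qq) := by
      rw [Fintype.sum_prod_type]
      rw [Fintype.sum_bool]
      rw [Fintype.sum_bool, Fintype.sum_bool]
      rw [hΔpdef]
      simp only [hpadef, hpbdef, hpcdef, hpddef, if_true, Bool.false_eq_true, if_false]
      ring
    rw [hid]
    exact Finset.abs_sum_le_sum_abs _ _
  have hSP : vitaliSum f px py n m ≤ ∑ k ∈ s, |Δp k| := by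
    have hsum : ∑ k ∈ s, |Δp k| =
        ∑ i ∈ Finset.range n, ∑ j ∈ Finset.range m, ∑ qq : Bool × Bool, |Δp ((i, j), qq)| := by
      rw [hsdef, Finset.sum_product, Finset.sum_product]
    rw [hsum, vitaliSum]
    apply Finset.sum_le_sum
    intro i hi
    apply Finset.sum_le_sum
    intro j hj
    exact hcell i (Finset.mem_range.mp hi) j (Finset.mem_range.mp hj)
  set Pin : (ℕ × ℕ) × Bool × Bool → Prop := fun k => mx k.1.1 = x ∧ my k.1.2 = y with hPindef
  set Sin := ∑ k ∈ s.filter Pin, |Δp k| with hSindef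
  set Sout := ∑ k ∈ s.filter (fun k => ¬ Pin k), |Δp k| with hSoutdef
  have hSin0 : 0 ≤ Sin := Finset.sum_nonneg fun k _ => abs_nonneg _
  have hSout0 : 0 ≤ Sout := Finset.sum_nonneg fun k _ => abs_nonneg _
  have hsplitsum : ∑ k ∈ s, |Δp k| = Sin + Sout :=
    (Finset.sum_filter_add_sum_filter_not s Pin _).symm
  have hpieceSub : ∀ k ∈ s,
      x - δ0 ≤ pa k ∧ pb k ≤ x + δ0 ∧ y - δ0 ≤ pc k ∧ pd k ≤ y + δ0 := by
    intro k hk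
    obtain ⟨hi, hj⟩ := hmem k hk
    obtain ⟨h1, h2, h3⟩ := hpab k hi
    obtain ⟨h4, h5, h6⟩ := hpcd k hj
    have e1 : px 0 ≤ px k.1.1 := hpxm 0 k.1.1 (by omega) (by omega)
    have e2 : px (k.1.1 + 1) ≤ px n := hpxm (k.1.1 + 1) n (by omega) le_rfl
    have e3 : py 0 ≤ py k.1.2 := hpym 0 k.1.2 (by omega) (by omega)
    have e4 : py (k.1.2 + 1) ≤ py m := hpym (k.1.2 + 1) m (by omega) le_rfl
    refine ⟨?_, ?_, ?_, ?_⟩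
    · linarith [hcorner.1]
    · linarith [hcorner.2.1]
    · linarith [hcorner.2.2.1]
    · linarith [hcorner.2.2.2]
  have hterm : ∀ k ∈ s, |Δp k| ≤ 4 * η := by
    intro k hk
    obtain ⟨h1, h2, h3, h4⟩ := hpieceSub k hk
    obtain ⟨hi, hj⟩ := hmem k hk
    obtain ⟨g1, g2, g3⟩ := hpab k hi
    obtain ⟨g4, g5, g6⟩ := hpcd k hj
    have e1 := hosc (pb k) (pd k) (abs_le.2 ⟨by linarith, by linarith⟩)
      (abs_le.2 ⟨by linarith, by linarith⟩)
    have e2 := hosc (pa k) (pd k) (abs_le.2 ⟨by linarith, by linarith⟩)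
      (abs_le.2 ⟨by linarith, by linarith⟩)
    have e3 := hosc (pb k) (pc k) (abs_le.2 ⟨by linarith, by linarith⟩)
      (abs_le.2 ⟨by linarith, by linarith⟩)
    have e4 := hosc (pa k) (pc k) (abs_le.2 ⟨by linarith, by linarith⟩)
      (abs_le.2 ⟨by linarith, by linarith⟩)
    have f1 := abs_le.1 e1
    have f2 := abs_le.1 e2
    have f3 := abs_le.1 e3
    have f4 := abs_le.1 e4
    rw [hΔpdef]
    simp only []
    apply abs_le.2
    constructor
    · linarith [f1.1, f2.2, f3.2, f4.1]
    · linarith [f1.2, f2.1, f3.1, f4.2]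
  have hSin : Sin ≤ 64 * η := by
    have hsubf : s.filter Pin ⊆
        (((Finset.range n).filter fun i => px i ≤ x ∧ x ≤ px (i + 1)) ×ˢ
          ((Finset.range m).filter fun j => py j ≤ y ∧ y ≤ py (j + 1))) ×ˢ
          (Finset.univ : Finset (Bool × Bool)) := by
      intro k hk
      rw [Finset.mem_filter] at hk
      obtain ⟨hks, hPk⟩ := hk
      obtain ⟨hi, hj⟩ := hmem k hks
      have hxi : px k.1.1 ≤ x ∧ x ≤ px (k.1.1 + 1) := by
        have hmxx : mx k.1.1 = x := hPk.1
        constructor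
        · rw [← hmxx]; exact hmx1 _
        · by_contra hcon
          push_neg at hcon
          have h5 : mx k.1.1 ≤ px (k.1.1 + 1) := hmx2 _ hi
          rw [hmxx] at h5
          linarith
      have hyj : py k.1.2 ≤ y ∧ y ≤ py (k.1.2 + 1) := by
        have hmyy : my k.1.2 = y := hPk.2
        constructor
        · rw [← hmyy]; exact hmy1 _
        · by_contra hcon
          push_neg at hcon
          have h5 : my k.1.2 ≤ py (k.1.2 + 1) := hmy2 _ hj
          rw [hmyy] at h5
          linarith
      rw [Finset.mem_product, Finset.mem_product, Finset.mem_filter, Finset.mem_filter]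
      exact ⟨⟨⟨Finset.mem_range.2 hi, hxi⟩, ⟨Finset.mem_range.2 hj, hyj⟩⟩, Finset.mem_univ _⟩
    have hcard : (s.filter Pin).card ≤ 16 := by
      have hc2 := Finset.card_le_card hsubf
      rw [Finset.card_product, Finset.card_product] at hc2
      have c1 := card_filter_le_two hpx x
      have c2 := card_filter_le_two hpy y
      have c3 : (Finset.univ : Finset (Bool × Bool)).card = 4 := rfl
      calc (s.filter Pin).card ≤ _ := hc2
        _ ≤ 2 * 2 * 4 := by
            rw [c3]
            exact Nat.mul_le_mul (Nat.mul_le_mul c1 c2) le_rfl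
        _ = 16 := by norm_num
    calc Sin ≤ (s.filter Pin).card • (4 * η) :=
        Finset.sum_le_card_nsmul _ _ _ fun k hk => hterm k (Finset.mem_filter.mp hk).1
      _ = ((s.filter Pin).card : ℝ) * (4 * η) := nsmul_eq_mul _ _
      _ ≤ 16 * (4 * η) := by
          apply mul_le_mul_of_nonneg_right _ (by positivity)
          exact_mod_cast hcard
      _ = 64 * η := by ring
  -- the separation radius
  set Dset : Finset ℝ :=
    (((Finset.range (n + 1)).image fun i => |px i - x|) ∪
      ((Finset.range (m + 1)).image fun j => |py j - y|) ∪ {δ0}).filter (fun z => 0 < z)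
    with hDsetdef
  have hδ0mem : δ0 ∈ Dset := by
    rw [hDsetdef, Finset.mem_filter]
    exact ⟨Finset.mem_union_right _ (Finset.mem_singleton_self _), hδ0⟩
  set ρ2 := Dset.min' ⟨δ0, hδ0mem⟩ with hρ2def
  have hρ2pos : 0 < ρ2 := (Finset.mem_filter.mp (Dset.min'_mem _)).2
  have hρ2δ0 : ρ2 ≤ δ0 := Finset.min'_le _ _ hδ0mem
  have hgapx : ∀ i ≤ n, px i ≠ x → ρ2 ≤ |px i - x| := by
    intro i hi hne
    apply Finset.min'_le
    rw [hDsetdef, Finset.mem_filter]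
    constructor
    · apply Finset.mem_union_left
      apply Finset.mem_union_left
      exact Finset.mem_image_of_mem _ (Finset.mem_range.2 (by omega))
    · exact abs_pos.2 (sub_ne_zero.2 hne)
  have hgapy : ∀ j ≤ m, py j ≠ y → ρ2 ≤ |py j - y| := by
    intro j hj hne
    apply Finset.min'_le
    rw [hDsetdef, Finset.mem_filter]
    constructor
    · apply Finset.mem_union_left
      apply Finset.mem_union_right
      exact Finset.mem_image_of_mem _ (Finset.mem_range.2 (by omega))
    · exact abs_pos.2 (sub_ne_zero.2 hne)
  set ρ := ρ2 / 2 with hρdef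
  have hρpos : 0 < ρ := by positivity
  -- separation of non-inner nondegenerate pieces from the small square
  have hsep : ∀ k ∈ s, ¬ Pin k → pa k < pb k → pc k < pd k →
      (pb k ≤ x - ρ2 ∨ x + ρ2 ≤ pa k) ∨ (pd k ≤ y - ρ2 ∨ y + ρ2 ≤ pc k) := by
    intro k hk hnPin hab hcd
    obtain ⟨hi, hj⟩ := hmem k hk
    rw [hPindef, not_and_or] at hnPin
    rcases hnPin with hmxne | hmyne
    · left
      have hx' : x < px k.1.1 ∨ px (k.1.1 + 1) < x := by
        by_contra hcon
        push_neg at hcon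
        apply hmxne
        rw [hmxdef]
        simp only []
        rw [min_eq_left hcon.2, max_eq_right hcon.1]
      rcases hx' with hx1 | hx2
      · have hmxi : mx k.1.1 = px k.1.1 := by
          rw [hmxdef]
          simp only []
          apply max_eq_left
          calc min x (px (k.1.1 + 1)) ≤ x := min_le_left _ _
            _ ≤ px k.1.1 := hx1.le
        cases hq : k.2.1
        · -- pa k = mx k.1.1 = px k.1.1 > x
          right
          have hpak : pa k = px k.1.1 := by
            rw [hpadef]; simp only [hq, Bool.false_eq_true, if_false]; exact hmxi
          have hne : px k.1.1 ≠ x := by intro e; rw [e] at hx1; linarith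
          have := hgapx k.1.1 (by omega) hne
          rw [abs_of_pos (by linarith)] at this
          rw [hpak]; linarith
        · -- piece degenerate : pa = px i, pb = mx i = px i, contradiction
          exfalso
          have hpak : pa k = px k.1.1 := by rw [hpadef]; simp only [hq, if_true]
          have hpbk : pb k = px k.1.1 := by
            rw [hpbdef]; simp only [hq, if_true]; exact hmxi
          rw [hpak, hpbk] at hab
          exact lt_irrefl _ hab
      · have hmxi : mx k.1.1 = px (k.1.1 + 1) := by
          rw [hmxdef]
          simp only []
          rw [min_eq_right hx2.le]
          exact max_eq_right (hpx _ hi).le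
        cases hq : k.2.1
        · -- pa = mx = px (i+1), pb = px (i+1): degenerate
          exfalso
          have hpak : pa k = px (k.1.1 + 1) := by
            rw [hpadef]; simp only [hq, Bool.false_eq_true, if_false]; exact hmxi
          have hpbk : pb k = px (k.1.1 + 1) := by
            rw [hpbdef]; simp only [hq, Bool.false_eq_true, if_false]
          rw [hpak, hpbk] at hab
          exact lt_irrefl _ hab
        · -- pb = mx = px (i+1) < x
          left
          have hpbk : pb k = px (k.1.1 + 1) := by
            rw [hpbdef]; simp only [hq, if_true]; exact hmxi
          have hne : px (k.1.1 + 1) ≠ x := by intro e; rw [e] at hx2; linarith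
          have := hgapx (k.1.1 + 1) (by omega) hne
          rw [abs_of_neg (by linarith)] at this
          rw [hpbk]; linarith
    · right
      have hy' : y < py k.1.2 ∨ py (k.1.2 + 1) < y := by
        by_contra hcon
        push_neg at hcon
        apply hmyne
        rw [hmydef]
        simp only []
        rw [min_eq_left hcon.2, max_eq_right hcon.1]
      rcases hy' with hy1 | hy2
      · have hmyi : my k.1.2 = py k.1.2 := by
          rw [hmydef]
          simp only []
          apply max_eq_left
          calc min y (py (k.1.2 + 1)) ≤ y := min_le_left _ _
            _ ≤ py k.1.2 := hy1.le
        cases hq : k.2.2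
        · right
          have hpck : pc k = py k.1.2 := by
            rw [hpcdef]; simp only [hq, Bool.false_eq_true, if_false]; exact hmyi
          have hne : py k.1.2 ≠ y := by intro e; rw [e] at hy1; linarith
          have := hgapy k.1.2 (by omega) hne
          rw [abs_of_pos (by linarith)] at this
          rw [hpck]; linarith
        · exfalso
          have hpck : pc k = py k.1.2 := by rw [hpcdef]; simp only [hq, if_true]
          have hpdk : pd k = py k.1.2 := by
            rw [hpddef]; simp only [hq, if_true]; exact hmyi
          rw [hpck, hpdk] at hcd
          exact lt_irrefl _ hcd
      · have hmyi : my k.1.2 = py (k.1.2 + 1) := by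
          rw [hmydef]
          simp only []
          rw [min_eq_right hy2.le]
          exact max_eq_right (hpy _ hj).le
        cases hq : k.2.2
        · exfalso
          have hpck : pc k = py (k.1.2 + 1) := by
            rw [hpcdef]; simp only [hq, Bool.false_eq_true, if_false]; exact hmyi
          have hpdk : pd k = py (k.1.2 + 1) := by
            rw [hpddef]; simp only [hq, Bool.false_eq_true, if_false]
          rw [hpck, hpdk] at hcd
          exact lt_irrefl _ hcd
        · left
          have hpdk : pd k = py (k.1.2 + 1) := by
            rw [hpddef]; simp only [hq, if_true]; exact hmyi
          have hne : py (k.1.2 + 1) ≠ y := by intro e; rw [e] at hy2; linarith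
          have := hgapy (k.1.2 + 1) (by omega) hne
          rw [abs_of_neg (by linarith)] at this
          rw [hpdk]; linarith
  -- pieces of distinct "column" indices have disjoint x-interiors
  have hxdisj : ∀ k l : (ℕ × ℕ) × Bool × Bool, k.1.1 < n → l.1.1 < n →
      (k.1.1, k.2.1) ≠ (l.1.1, l.2.1) →
      Set.Ioo (pa k) (pb k) ∩ Set.Ioo (pa l) (pb l) = ∅ := by
    intro k l hk hl hne
    rcases Nat.lt_trichotomy k.1.1 l.1.1 with h | h | h
    · apply Ioo_disj_of_le
      calc pb k ≤ px (k.1.1 + 1) := (hpab k hk).2.2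
        _ ≤ px l.1.1 := hpxm _ _ (by omega) (by omega)
        _ ≤ pa l := (hpab l hl).1
    · have hq : k.2.1 ≠ l.2.1 := by
        intro e
        exact hne (by rw [h, e])
      cases hqk : k.2.1 <;> cases hql : l.2.1
      · exact absurd (by rw [hqk, hql]) hq
      · rw [Set.inter_comm]
        apply Ioo_disj_of_le
        have e1 : pb l = mx l.1.1 := by rw [hpbdef]; simp only [hql, if_true]
        have e2 : pa k = mx k.1.1 := by
          rw [hpadef]; simp only [hqk, Bool.false_eq_true, if_false]
        rw [e1, e2, h]
      · apply Ioo_disj_of_le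
        have e1 : pb k = mx k.1.1 := by rw [hpbdef]; simp only [hqk, if_true]
        have e2 : pa l = mx l.1.1 := by
          rw [hpadef]; simp only [hql, Bool.false_eq_true, if_false]
        rw [e1, e2, h]
      · exact absurd (by rw [hqk, hql]) hq
    · rw [Set.inter_comm]
      apply Ioo_disj_of_le
      calc pb l ≤ px (l.1.1 + 1) := (hpab l hl).2.2
        _ ≤ px k.1.1 := hpxm _ _ (by omega) (by omega)
        _ ≤ pa k := (hpab k hk).1
  have hydisj : ∀ k l : (ℕ × ℕ) × Bool × Bool, k.1.2 < m → l.1.2 < m →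
      (k.1.2, k.2.2) ≠ (l.1.2, l.2.2) →
      Set.Ioo (pc k) (pd k) ∩ Set.Ioo (pc l) (pd l) = ∅ := by
    intro k l hk hl hne
    rcases Nat.lt_trichotomy k.1.2 l.1.2 with h | h | h
    · apply Ioo_disj_of_le
      calc pd k ≤ py (k.1.2 + 1) := (hpcd k hk).2.2
        _ ≤ py l.1.2 := hpym _ _ (by omega) (by omega)
        _ ≤ pc l := (hpcd l hl).1
    · have hq : k.2.2 ≠ l.2.2 := by
        intro e
        exact hne (by rw [h, e])
      cases hqk : k.2.2 <;> cases hql : l.2.2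
      · exact absurd (by rw [hqk, hql]) hq
      · rw [Set.inter_comm]
        apply Ioo_disj_of_le
        have e1 : pd l = my l.1.2 := by rw [hpddef]; simp only [hql, if_true]
        have e2 : pc k = my k.1.2 := by
          rw [hpcdef]; simp only [hqk, Bool.false_eq_true, if_false]
        rw [e1, e2, h]
      · apply Ioo_disj_of_le
        have e1 : pd k = my k.1.2 := by rw [hpddef]; simp only [hqk, if_true]
        have e2 : pc l = my l.1.2 := by
          rw [hpcdef]; simp only [hql, Bool.false_eq_true, if_false]
        rw [e1, e2, h]
      · exact absurd (by rw [hqk, hql]) hq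
    · rw [Set.inter_comm]
      apply Ioo_disj_of_le
      calc pd l ≤ py (l.1.2 + 1) := (hpcd l hl).2.2
        _ ≤ py k.1.2 := hpym _ _ (by omega) (by omega)
        _ ≤ pc k := (hpcd k hk).1
  -- degenerate pieces contribute zero
  have hdegzero : ∀ k ∈ s, ¬ (pa k < pb k ∧ pc k < pd k) → |Δp k| = 0 := by
    intro k hk hcon
    obtain ⟨hi, hj⟩ := hmem k hk
    rw [not_and_or, not_lt, not_lt] at hcon
    have hab := (hpab k hi).2.1
    have hcd := (hpcd k hj).2.1
    have hz : Δp k = 0 := by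
      rw [hΔpdef]
      simp only []
      rcases hcon with h | h
      · have e : pa k = pb k := le_antisymm hab h
        rw [e]; ring
      · have e : pc k = pd k := le_antisymm hcd h
        rw [e]; ring
    rw [hz, abs_zero]
  set soutnd := s.filter (fun k => (¬ Pin k) ∧ pa k < pb k ∧ pc k < pd k) with hsoutnddef
  have hSoutnd : Sout = ∑ k ∈ soutnd, |Δp k| := by
    rw [hSoutdef]
    have e : soutnd = (s.filter fun k => ¬ Pin k).filter fun k => pa k < pb k ∧ pc k < pd k := by
      rw [Finset.filter_filter, hsoutnddef]
    rw [e]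
    refine (Finset.sum_filter_of_ne ?_).symm
    intro k hk hne
    by_contra hcon
    exact hne (hdegzero k (Finset.mem_filter.mp hk).1 hcon)
  set Qρ := Set.Icc (x - ρ) (x + ρ) ×ˢ Set.Icc (y - ρ) (y + ρ) with hQρ
  have hKey : vitaliVar f Qρ ≤ vitaliVar f Q0 - ENNReal.ofReal Sout := by
    apply vitaliVar_le
    intro nG mG gx gy hgx hgy hGrect
    apply ENNReal.le_sub_of_add_le_right ENNReal.ofReal_ne_top
    have hGx : ∀ i ≤ nG, x - ρ ≤ gx i ∧ gx i ≤ x + ρ := by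
      intro i hi
      have h1 : ((gx i, gy 0) : ℝ × ℝ) ∈ Set.Icc (gx 0) (gx nG) ×ˢ Set.Icc (gy 0) (gy mG) :=
        ⟨⟨gridMono hgx 0 i (by omega) hi, gridMono hgx i nG hi le_rfl⟩,
          ⟨le_rfl, gridMono hgy 0 mG (by omega) le_rfl⟩⟩
      have h2 := hGrect h1
      rw [hQρ] at h2
      exact ⟨h2.1.1, h2.1.2⟩
    have hGy : ∀ j ≤ mG, y - ρ ≤ gy j ∧ gy j ≤ y + ρ := by
      intro j hj
      have h1 : ((gx 0, gy j) : ℝ × ℝ) ∈ Set.Icc (gx 0) (gx nG) ×ˢ Set.Icc (gy 0) (gy mG) :=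
        ⟨⟨le_rfl, gridMono hgx 0 nG (by omega) le_rfl⟩,
          ⟨gridMono hgy 0 j (by omega) hj, gridMono hgy j mG hj le_rfl⟩⟩
      have h2 := hGrect h1
      rw [hQρ] at h2
      exact ⟨h2.2.1, h2.2.2⟩
    set t := soutnd.disjSum (Finset.range nG ×ˢ Finset.range mG) with htdef
    set A' : ((ℕ × ℕ) × Bool × Bool) ⊕ (ℕ × ℕ) → ℝ :=
      Sum.elim pa (fun ij => gx ij.1) with hA'def
    set B' : ((ℕ × ℕ) × Bool × Bool) ⊕ (ℕ × ℕ) → ℝ :=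
      Sum.elim pb (fun ij => gx (ij.1 + 1)) with hB'def
    set C' : ((ℕ × ℕ) × Bool × Bool) ⊕ (ℕ × ℕ) → ℝ :=
      Sum.elim pc (fun ij => gy ij.2) with hC'def
    set D' : ((ℕ × ℕ) × Bool × Bool) ⊕ (ℕ × ℕ) → ℝ :=
      Sum.elim pd (fun ij => gy (ij.2 + 1)) with hD'def
    have hmemnd : ∀ k ∈ soutnd, k ∈ s ∧ ¬ Pin k ∧ pa k < pb k ∧ pc k < pd k := by
      intro k hk
      have := Finset.mem_filter.mp hk
      exact ⟨this.1, this.2⟩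
    have hmemG : ∀ ij : ℕ × ℕ, ij ∈ Finset.range nG ×ˢ Finset.range mG →
        ij.1 < nG ∧ ij.2 < mG := by
      intro ij hij
      rw [Finset.mem_product, Finset.mem_range, Finset.mem_range] at hij
      exact hij
    have hnd' : ∀ k ∈ t, A' k < B' k ∧ C' k < D' k := by
      intro k hk
      rcases k with k | ij
      · rw [htdef, Finset.inl_mem_disjSum] at hk
        obtain ⟨_, _, hab, hcd⟩ := hmemnd k hk
        simp only [hA'def, hB'def, hC'def, hD'def, Sum.elim_inl]
        exact ⟨hab, hcd⟩
      · rw [htdef, Finset.inr_mem_disjSum] at hk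
        obtain ⟨h1, h2⟩ := hmemG ij hk
        simp only [hA'def, hB'def, hC'def, hD'def, Sum.elim_inr]
        exact ⟨hgx _ h1, hgy _ h2⟩
    have hbox' : ∀ k ∈ t, x - δ0 ≤ A' k ∧ B' k ≤ x + δ0 ∧ y - δ0 ≤ C' k ∧ D' k ≤ y + δ0 := by
      intro k hk
      rcases k with k | ij
      · rw [htdef, Finset.inl_mem_disjSum] at hk
        obtain ⟨hks, _, _, _⟩ := hmemnd k hk
        simp only [hA'def, hB'def, hC'def, hD'def, Sum.elim_inl]
        exact hpieceSub k hks
      · rw [htdef, Finset.inr_mem_disjSum] at hk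
        obtain ⟨h1, h2⟩ := hmemG ij hk
        simp only [hA'def, hB'def, hC'def, hD'def, Sum.elim_inr]
        have e1 := hGx ij.1 (by omega)
        have e2 := hGx (ij.1 + 1) (by omega)
        have e3 := hGy ij.2 (by omega)
        have e4 := hGy (ij.2 + 1) (by omega)
        refine ⟨?_, ?_, ?_, ?_⟩
        · linarith [e1.1]
        · linarith [e2.2]
        · linarith [e3.1]
        · linarith [e4.2]
    -- disjointness between an outer piece and a small-square cell
    have hsepG : ∀ k ∈ soutnd, ∀ ij : ℕ × ℕ, ij.1 < nG → ij.2 < mG →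
        Set.Ioo (pa k) (pb k) ∩ Set.Ioo (gx ij.1) (gx (ij.1 + 1)) = ∅ ∨
        Set.Ioo (pc k) (pd k) ∩ Set.Ioo (gy ij.2) (gy (ij.2 + 1)) = ∅ := by
      intro k hk ij h1 h2
      obtain ⟨hks, hnPin, hab, hcd⟩ := hmemnd k hk
      rcases hsep k hks hnPin hab hcd with (hc | hc) | (hc | hc)
      · left
        apply Ioo_disj_of_le
        have := (hGx ij.1 (by omega)).1
        linarith
      · left
        rw [Set.inter_comm]
        apply Ioo_disj_of_le
        have := (hGx (ij.1 + 1) (by omega)).2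
        linarith
      · right
        apply Ioo_disj_of_le
        have := (hGy ij.2 (by omega)).1
        linarith
      · right
        rw [Set.inter_comm]
        apply Ioo_disj_of_le
        have := (hGy (ij.2 + 1) (by omega)).2
        linarith
    have hdisj' : ∀ k ∈ t, ∀ l ∈ t, k ≠ l →
        Set.Ioo (A' k) (B' k) ∩ Set.Ioo (A' l) (B' l) = ∅ ∨
        Set.Ioo (C' k) (D' k) ∩ Set.Ioo (C' l) (D' l) = ∅ := by
      intro k hk l hl hkl
      rcases k with k | ij <;> rcases l with l | ij'
      · rw [htdef, Finset.inl_mem_disjSum] at hk hl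
        have hklne : k ≠ l := fun e => hkl (by rw [e])
        obtain ⟨hks, _, _, _⟩ := hmemnd k hk
        obtain ⟨hls, _, _, _⟩ := hmemnd l hl
        obtain ⟨hi, hj⟩ := hmem k hks
        obtain ⟨hi', hj'⟩ := hmem l hls
        simp only [hA'def, hB'def, hC'def, hD'def, Sum.elim_inl]
        by_cases hxy : (k.1.1, k.2.1) = (l.1.1, l.2.1)
        · right
          apply hydisj k l hj hj'
          intro e
          apply hklne
          have e1 : k.1.1 = l.1.1 := (Prod.mk.injEq _ _ _ _).mp hxy |>.1
          have e2 : k.2.1 = l.2.1 := (Prod.mk.injEq _ _ _ _).mp hxy |>.2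
          have e3 : k.1.2 = l.1.2 := (Prod.mk.injEq _ _ _ _).mp e |>.1
          have e4 : k.2.2 = l.2.2 := (Prod.mk.injEq _ _ _ _).mp e |>.2
          have ek1 : k.1 = l.1 := Prod.ext e1 e3
          have ek2 : k.2 = l.2 := Prod.ext e2 e4
          exact Prod.ext ek1 ek2
        · left
          exact hxdisj k l hi hi' hxy
      · rw [htdef, Finset.inl_mem_disjSum] at hk
        rw [htdef, Finset.inr_mem_disjSum] at hl
        obtain ⟨h1, h2⟩ := hmemG ij' hl
        simp only [hA'def, hB'def, hC'def, hD'def, Sum.elim_inl, Sum.elim_inr]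
        exact hsepG k hk ij' h1 h2
      · rw [htdef, Finset.inr_mem_disjSum] at hk
        rw [htdef, Finset.inl_mem_disjSum] at hl
        obtain ⟨h1, h2⟩ := hmemG ij hk
        simp only [hA'def, hB'def, hC'def, hD'def, Sum.elim_inl, Sum.elim_inr]
        rcases hsepG l hl ij h1 h2 with hc | hc
        · left; rw [Set.inter_comm]; exact hc
        · right; rw [Set.inter_comm]; exact hc
      · rw [htdef, Finset.inr_mem_disjSum] at hk hl
        obtain ⟨h1, h2⟩ := hmemG ij hk
        obtain ⟨h1', h2'⟩ := hmemG ij' hl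
        have hne : ij ≠ ij' := fun e => hkl (by rw [e])
        simp only [hA'def, hB'def, hC'def, hD'def, Sum.elim_inr]
        by_cases he : ij.1 = ij'.1
        · right
          have hj : ij.2 ≠ ij'.2 := by
            intro e; exact hne (Prod.ext he e)
          rcases Nat.lt_or_ge ij.2 ij'.2 with hlt | hge
          · apply Ioo_disj_of_le
            exact gridMono hgy (ij.2 + 1) ij'.2 (by omega) (by omega)
          · rw [Set.inter_comm]
            apply Ioo_disj_of_le
            exact gridMono hgy (ij'.2 + 1) ij.2 (by omega) (by omega)
        · left
          rcases Nat.lt_or_ge ij.1 ij'.1 with hlt | hge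
          · apply Ioo_disj_of_le
            exact gridMono hgx (ij.1 + 1) ij'.1 (by omega) (by omega)
          · rw [Set.inter_comm]
            apply Ioo_disj_of_le
            exact gridMono hgx (ij'.1 + 1) ij.1 (by omega) (by omega)
    have hmas := master f t A' B' C' D' (x - δ0) (x + δ0) (y - δ0) (y + δ0) hnd' hbox' hdisj'
    rw [← hQ0] at hmas
    have hsum : ∑ k ∈ t, |f (B' k) (D' k) - f (A' k) (D' k) - f (B' k) (C' k) + f (A' k) (C' k)|
        = Sout + vitaliSum f gx gy nG mG := by
      rw [htdef, Finset.sum_disjSum]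
      congr 1
      · rw [hSoutnd]
        apply Finset.sum_congr rfl
        intro k hk
        simp only [hA'def, hB'def, hC'def, hD'def, Sum.elim_inl, hΔpdef]
      · rw [vitaliSum, Finset.sum_product]
        apply Finset.sum_congr rfl
        intro i _
        apply Finset.sum_congr rfl
        intro j _
        simp only [hA'def, hB'def, hC'def, hD'def, Sum.elim_inr]
    rw [hsum] at hmas
    have hvsG0 : 0 ≤ vitaliSum f gx gy nG mG := by
      rw [vitaliSum]
      apply Finset.sum_nonneg
      intro i _
      apply Finset.sum_nonneg
      intro j _
      exact abs_nonneg _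
    calc ENNReal.ofReal (vitaliSum f gx gy nG mG) + ENNReal.ofReal Sout
        = ENNReal.ofReal (Sout + vitaliSum f gx gy nG mG) := by
          rw [ENNReal.ofReal_add hSout0 hvsG0, add_comm]
      _ ≤ vitaliVar f Q0 := hmas
  have hchain : vitaliVar f Qρ ≤ ENNReal.ofReal (ε / 2) := by
    have e1 : ENNReal.ofReal (Sin + Sout) + ENNReal.ofReal (ε / 4)
        = ENNReal.ofReal (Sin + ε / 4) + ENNReal.ofReal Sout := by
      rw [← ENNReal.ofReal_add (by linarith) (by linarith),
        ← ENNReal.ofReal_add (by linarith) hSout0]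
      congr 1
      ring
    calc vitaliVar f Qρ ≤ vitaliVar f Q0 - ENNReal.ofReal Sout := hKey
      _ ≤ (ENNReal.ofReal (vitaliSum f px py n m) + ENNReal.ofReal (ε / 4)) -
          ENNReal.ofReal Sout := tsub_le_tsub_right hVle _
      _ ≤ (ENNReal.ofReal (Sin + Sout) + ENNReal.ofReal (ε / 4)) - ENNReal.ofReal Sout := by
          apply tsub_le_tsub_right
          apply add_le_add_left
          apply ENNReal.ofReal_le_ofReal
          rw [← hsplitsum]
          exact hSP
      _ = (ENNReal.ofReal (Sin + ε / 4) + ENNReal.ofReal Sout) - ENNReal.ofReal Sout := by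
          rw [e1]
      _ = ENNReal.ofReal (Sin + ε / 4) := ENNReal.add_sub_cancel_right ENNReal.ofReal_ne_top
      _ ≤ ENNReal.ofReal (ε / 2) := by
          apply ENNReal.ofReal_le_ofReal
          rw [hηdef] at hSin
          linarith
  refine ⟨ρ, hρpos, ?_⟩
  rw [← hQρ]
  exact lt_of_le_of_lt hchain ((ENNReal.ofReal_lt_ofReal_iff hε).2 (by linarith))
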